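/- In the equidistant conic projection with ρ(u) = c − u, the longitude-scale error ε(u) = k(c−u)/cos u − 1 vanishes at exactly two latitudes u₁ < u₂ in (0, π/2) for suitable constants k, c, and given two fixed outer latitudes a < b one can choose k and c so that the maximum of |ε| on [a,b] is attained (with equal value) at the three points a, b, and the interior critical point, characterizing the minimax choice of standard parallels described by Euler for Delisle's map. -/

import Mathlib

open Real

/-- The longitude-scale error of the equidistant conic projection with
`ρ(u) = c − u` and cone constant `k`, at latitude `u`. -/
noncomputable def scaleError (k c u : ℝ) : ℝ := k * (c - u) / cos u - 1

/-- The maximal longitude-scale error over the band of latitudes `[a,b]`. -/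
noncomputable def maxError (a b k c : ℝ) : ℝ :=
  sSup ((fun u => |scaleError k c u|) '' Set.Icc a b)

/-- Euler's account of Delisle's choice of standard parallels: for fixed outer
latitudes `0 < a < b < π/2` there are `k > 0` and `c` minimizing the maximal
longitude-scale error `max_{u∈[a,b]} |k(c−u)/cos u − 1|` of the equidistant conic
projection `ρ(u) = c − u`; for this minimax choice the error vanishes at exactly
two latitudes `u₁ < u₂` inside `(a,b)` (the standard parallels), and the maximal
error is attained, with a common value, at the three points `a`, `b` and an
interior critical point `u'` of the error (equioscillation). -/
theorem delisle_minimax_standard_parallels (a b : ℝ)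
    (ha : 0 < a) (hab : a < b) (hb : b < π / 2) :
    ∃ k c : ℝ, 0 < k ∧
      (∀ k' c' : ℝ, 0 < k' → maxError a b k c ≤ maxError a b k' c') ∧
      (∃ u₁ u₂ : ℝ, u₁ ∈ Set.Ioo a b ∧ u₂ ∈ Set.Ioo a b ∧ u₁ < u₂ ∧
        scaleError k c u₁ = 0 ∧ scaleError k c u₂ = 0 ∧
        ∀ u ∈ Set.Icc a b, scaleError k c u = 0 → u = u₁ ∨ u = u₂) ∧
      (∃ u' ∈ Set.Ioo a b, deriv (scaleError k c) u' = 0 ∧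
        |scaleError k c a| = maxError a b k c ∧
        |scaleError k c b| = maxError a b k c ∧
        |scaleError k c u'| = maxError a b k c) := by
  have hπ := Real.pi_pos
  have hcos : ∀ u ∈ Set.Icc a b, 0 < Real.cos u := by
    intro u hu
    exact Real.cos_pos_of_mem_Ioo ⟨by linarith [hu.1], lt_of_le_of_lt hu.2 hb⟩
  have hcosne : ∀ u ∈ Set.Icc a b, Real.cos u ≠ 0 := fun u hu => (hcos u hu).ne'
  have hcab : Real.cos b < Real.cos a :=
    Real.cos_lt_cos_of_nonneg_of_le_pi ha.le (by linarith) hab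
  have hD : (0:ℝ) < Real.cos a - Real.cos b := sub_pos.2 hcab
  set D : ℝ := Real.cos a - Real.cos b with hD_def
  set c : ℝ := (b * Real.cos a - a * Real.cos b) / D with hc_def
  have hca : c - a = (b - a) * Real.cos a / D := by
    rw [hc_def]; field_simp; ring
  have hcb : c - b = (b - a) * Real.cos b / D := by
    rw [hc_def]; field_simp; ring
  have hcosa : 0 < Real.cos a := hcos a ⟨le_refl a, hab.le⟩
  have hcosb : 0 < Real.cos b := hcos b ⟨hab.le, le_refl b⟩
  have hcgtb : b < c := by
    have h1 : 0 < (b - a) * Real.cos b / D := div_pos (mul_pos (sub_pos.2 hab) hcosb) hD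
    linarith [hcb]
  set F : ℝ → ℝ := fun u => (c - u) / Real.cos u with hF_def
  have hFab : F a = F b := by
    show (c - a) / Real.cos a = (c - b) / Real.cos b
    rw [hca, hcb]
    field_simp
  have hFcont : ContinuousOn F (Set.Icc a b) :=
    ContinuousOn.div (by fun_prop) Real.continuous_cos.continuousOn hcosne
  set G : ℝ → ℝ := fun u => (c - u) * Real.sin u - Real.cos u with hG_def
  have hderivF : ∀ u ∈ Set.Icc a b, HasDerivAt F (G u / Real.cos u ^ 2) u := by
    intro u hu
    have h1 : HasDerivAt (fun v : ℝ => c - v) (-1) u := by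
      simpa using (hasDerivAt_id u).const_sub c
    have h2 := h1.div (Real.hasDerivAt_cos u) (hcosne u hu)
    refine HasDerivAt.congr_deriv h2 (Eq.symm ?_)
    show G u / Real.cos u ^ 2 = _
    rw [hG_def]
    field_simp
    ring
  obtain ⟨m, hm, hGm0⟩ : ∃ m ∈ Set.Ioo a b, G m / Real.cos m ^ 2 = 0 :=
    exists_hasDerivAt_eq_zero hab hFcont hFab
      (fun x hx => hderivF x (Set.Ioo_subset_Icc_self hx))
  have hmab : m ∈ Set.Icc a b := Set.Ioo_subset_Icc_self hm
  have hGm : G m = 0 := by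
    rcases div_eq_zero_iff.1 hGm0 with h | h
    · exact h
    · exact absurd h (pow_ne_zero 2 (hcosne m hmab))
  have hGderiv : ∀ x : ℝ, HasDerivAt G ((c - x) * Real.cos x) x := by
    intro x
    have h1 : HasDerivAt (fun v : ℝ => c - v) (-1) x := by
      simpa using (hasDerivAt_id x).const_sub c
    have h2 := (h1.mul (Real.hasDerivAt_sin x)).sub (Real.hasDerivAt_cos x)
    refine HasDerivAt.congr_deriv h2 ?_
    ring
  have hGmono : StrictMonoOn G (Set.Icc a b) := by
    apply strictMonoOn_of_deriv_pos (convex_Icc a b)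
      (fun x _ => (hGderiv x).continuousAt.continuousWithinAt)
    intro x hx
    rw [interior_Icc] at hx
    rw [(hGderiv x).deriv]
    have h1 : x < c := lt_trans hx.2 hcgtb
    have h2 := hcos x (Set.Ioo_subset_Icc_self hx)
    exact mul_pos (by linarith) h2
  have hGneg : ∀ x ∈ Set.Icc a m, x ≠ m → G x < 0 := by
    intro x hx hxm
    have : G x < G m := hGmono ⟨hx.1, hx.2.trans hm.2.le⟩ hmab (lt_of_le_of_ne hx.2 hxm)
    linarith [hGm]
  have hGpos : ∀ x ∈ Set.Icc m b, x ≠ m → 0 < G x := by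
    intro x hx hxm
    have : G m < G x := hGmono hmab ⟨hm.1.le.trans hx.1, hx.2⟩ (lt_of_le_of_ne hx.1 (Ne.symm hxm))
    linarith [hGm]
  have hFanti : StrictAntiOn F (Set.Icc a m) := by
    apply strictAntiOn_of_deriv_neg (convex_Icc a m)
      (hFcont.mono (Set.Icc_subset_Icc le_rfl hm.2.le))
    intro x hx
    rw [interior_Icc] at hx
    have hxab : x ∈ Set.Icc a b := ⟨hx.1.le, hx.2.le.trans hm.2.le⟩
    rw [(hderivF x hxab).deriv]
    have h1 : G x < 0 := hGneg x ⟨hx.1.le, hx.2.le⟩ hx.2.ne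
    have h2 := hcos x hxab
    exact div_neg_of_neg_of_pos h1 (by positivity)
  have hFmono : StrictMonoOn F (Set.Icc m b) := by
    apply strictMonoOn_of_deriv_pos (convex_Icc m b)
      (hFcont.mono (Set.Icc_subset_Icc hm.1.le le_rfl))
    intro x hx
    rw [interior_Icc] at hx
    have hxab : x ∈ Set.Icc a b := ⟨hm.1.le.trans hx.1.le, hx.2.le⟩
    rw [(hderivF x hxab).deriv]
    have h1 : 0 < G x := hGpos x ⟨hx.1.le, hx.2.le⟩ (ne_of_gt hx.1)
    have h2 := hcos x hxab
    exact div_pos h1 (by positivity)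
  have hFpos : ∀ u ∈ Set.Icc a b, 0 < F u := by
    intro u hu
    have h1 : u < c := lt_of_le_of_lt hu.2 hcgtb
    exact div_pos (by linarith) (hcos u hu)
  have hFma : F m < F a := hFanti ⟨le_rfl, hm.1.le⟩ ⟨hm.1.le, le_rfl⟩ hm.1
  have hFle : ∀ u ∈ Set.Icc a b, F u ≤ F a := by
    intro u hu
    rcases le_total u m with h | h
    · exact hFanti.antitoneOn ⟨le_rfl, hm.1.le⟩ ⟨hu.1, h⟩ hu.1
    · calc F u ≤ F b := hFmono.monotoneOn ⟨h, hu.2⟩ ⟨hm.2.le, le_rfl⟩ hu.2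
        _ = F a := hFab.symm
  have hFge : ∀ u ∈ Set.Icc a b, F m ≤ F u := by
    intro u hu
    rcases le_total u m with h | h
    · exact hFanti.antitoneOn ⟨hu.1, h⟩ ⟨hm.1.le, le_rfl⟩ h
    · exact hFmono.monotoneOn ⟨le_rfl, hm.2.le⟩ ⟨h, hu.2⟩ h
  have hFapos : 0 < F a := hFpos a ⟨le_rfl, hab.le⟩
  have hFmpos : 0 < F m := hFpos m hmab
  have hSpos : 0 < F a + F m := by positivity
  set k : ℝ := 2 / (F a + F m) with hk_def
  have hk : 0 < k := by positivity
  set E : ℝ := k * F a - 1 with hE_def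
  have hE : 0 < E := by
    rw [hE_def, hk_def, sub_pos, div_mul_eq_mul_div, lt_div_iff₀ hSpos]
    linarith
  have hsc : ∀ u, scaleError k c u = k * F u - 1 := by
    intro u
    show k * (c - u) / Real.cos u - 1 = k * ((c - u) / Real.cos u) - 1
    rw [mul_div_assoc]
  have hεm : scaleError k c m = -E := by
    rw [hsc, hE_def, hk_def]
    field_simp
    ring
  have hεa : scaleError k c a = E := (hsc a).trans hE_def.symm
  have hεb : scaleError k c b = E := by
    rw [hsc, hFab.symm]
  have habs : ∀ u ∈ Set.Icc a b, |scaleError k c u| ≤ E := by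
    intro u hu
    rw [hsc, abs_le]
    constructor
    · have h1 := hFge u hu
      have h2 : k * F m ≤ k * F u := mul_le_mul_of_nonneg_left h1 hk.le
      have h3 := hεm
      rw [hsc] at h3
      linarith
    · have h1 := hFle u hu
      have h2 : k * F u ≤ k * F a := mul_le_mul_of_nonneg_left h1 hk.le
      rw [hE_def]; linarith
  have hmax : maxError a b k c = E := by
    apply IsGreatest.csSup_eq
    constructor
    · exact ⟨a, ⟨le_rfl, hab.le⟩, by show |scaleError k c a| = E; rw [hεa]; exact abs_of_pos hE⟩
    · rintro x ⟨u, hu, rfl⟩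
      exact habs u hu
  -- zeros of the error
  have hhalf : (F a + F m) / 2 ∈ Set.Ioo (F m) (F a) := ⟨by linarith, by linarith⟩
  obtain ⟨u₁, hu₁, hFu₁⟩ : ∃ u₁ ∈ Set.Ioo a m, F u₁ = (F a + F m) / 2 := by
    have := intermediate_value_Ioo' hm.1.le (hFcont.mono (Set.Icc_subset_Icc le_rfl hm.2.le)) hhalf
    obtain ⟨u₁, hu₁, h⟩ := this
    exact ⟨u₁, hu₁, h⟩
  obtain ⟨u₂, hu₂, hFu₂⟩ : ∃ u₂ ∈ Set.Ioo m b, F u₂ = (F a + F m) / 2 := by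
    have hhalf' : (F a + F m) / 2 ∈ Set.Ioo (F m) (F b) := by rw [← hFab]; exact hhalf
    have := intermediate_value_Ioo hm.2.le (hFcont.mono (Set.Icc_subset_Icc hm.1.le le_rfl)) hhalf'
    obtain ⟨u₂, hu₂, h⟩ := this
    exact ⟨u₂, hu₂, h⟩
  have hzero : ∀ u, F u = (F a + F m) / 2 → scaleError k c u = 0 := by
    intro u h
    rw [hsc, h, hk_def]
    field_simp
    norm_num
  have hzero' : ∀ u, scaleError k c u = 0 → F u = (F a + F m) / 2 := by
    intro u h
    rw [hsc] at h
    have h1 : k * F u = 1 := by linarith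
    rw [hk_def] at h1
    field_simp at h1
    linarith
  -- the derivative at m
  have hderivε : deriv (scaleError k c) m = 0 := by
    have h1 : scaleError k c = fun u => k * F u - 1 := funext hsc
    have h2 : HasDerivAt (scaleError k c) (k * (G m / Real.cos m ^ 2)) m := by
      rw [h1]
      exact ((hderivF m hmab).const_mul k).sub_const 1
    rw [h2.deriv, hGm]
    simp
  refine ⟨k, c, hk, ?_, ?_, ?_⟩
  · -- minimality
    intro k' c' hk'
    rw [hmax]
    by_contra hlt
    push_neg at hlt
    set M := maxError a b k' c' with hM_def
    have hcont' : ContinuousOn (fun u => |scaleError k' c' u|) (Set.Icc a b) := by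
      apply ContinuousOn.abs
      apply ContinuousOn.sub _ continuousOn_const
      exact ContinuousOn.div (by fun_prop) Real.continuous_cos.continuousOn hcosne
    have hbdd : ∀ u ∈ Set.Icc a b, |scaleError k' c' u| ≤ M := by
      intro u hu
      exact le_csSup (isCompact_Icc.bddAbove_image hcont') ⟨u, hu, rfl⟩
    set L : ℝ → ℝ := fun u => k * (c - u) - k' * (c' - u) with hL_def
    have hdiff : ∀ u ∈ Set.Icc a b, scaleError k c u - scaleError k' c' u = L u / Real.cos u := by
      intro u hu
      show k * (c - u) / Real.cos u - 1 - (k' * (c' - u) / Real.cos u - 1)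
        = (k * (c - u) - k' * (c' - u)) / Real.cos u
      field_simp
      ring
    have hLpos : ∀ u ∈ Set.Icc a b, scaleError k' c' u < scaleError k c u → 0 < L u := by
      intro u hu h
      have h2 : 0 < L u / Real.cos u := by rw [← hdiff u hu]; linarith
      have h3 := mul_pos h2 (hcos u hu)
      rwa [div_mul_cancel₀ _ (hcosne u hu)] at h3
    have hLneg : ∀ u ∈ Set.Icc a b, scaleError k c u < scaleError k' c' u → L u < 0 := by
      intro u hu h
      have h2 : L u / Real.cos u < 0 := by rw [← hdiff u hu]; linarith
      have h3 := mul_neg_of_neg_of_pos h2 (hcos u hu)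
      rwa [div_mul_cancel₀ _ (hcosne u hu)] at h3
    have hLa : 0 < L a := by
      apply hLpos a ⟨le_rfl, hab.le⟩
      have := (abs_le.1 (hbdd a ⟨le_rfl, hab.le⟩)).2
      rw [hεa]; linarith
    have hLb : 0 < L b := by
      apply hLpos b ⟨hab.le, le_rfl⟩
      have := (abs_le.1 (hbdd b ⟨hab.le, le_rfl⟩)).2
      rw [hεb]; linarith
    have hLm : L m < 0 := by
      apply hLneg m hmab
      have := (abs_le.1 (hbdd m hmab)).1
      rw [hεm]; linarith
    have hkey : (L b - L m) * (m - a) = (L m - L a) * (b - m) := by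
      simp only [hL_def]
      ring
    have p1 : 0 < (L b - L m) * (m - a) := mul_pos (by linarith) (by linarith [hm.1])
    have p2 : (L m - L a) * (b - m) < 0 := mul_neg_of_neg_of_pos (by linarith) (by linarith [hm.2])
    linarith
  · -- the two standard parallels
    refine ⟨u₁, u₂, ⟨hu₁.1, hu₁.2.trans hm.2⟩, ⟨hm.1.trans hu₂.1, hu₂.2⟩,
      hu₁.2.trans hu₂.1, hzero u₁ hFu₁, hzero u₂ hFu₂, ?_⟩
    intro u hu h0
    have hFu := hzero' u h0
    rcases le_total u m with h | h
    · left
      exact hFanti.injOn ⟨hu.1, h⟩ ⟨hu₁.1.le, hu₁.2.le⟩ (hFu.trans hFu₁.symm)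
    · right
      exact hFmono.injOn ⟨h, hu.2⟩ ⟨hu₂.1.le, hu₂.2.le⟩ (hFu.trans hFu₂.symm)
  · -- equioscillation
    refine ⟨m, hm, hderivε, ?_, ?_, ?_⟩
    · rw [hεa, hmax]; exact abs_of_pos hE
    · rw [hεb, hmax]; exact abs_of_pos hE
    · rw [hεm, hmax, abs_neg]; exact abs_of_pos hE
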